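/- Let F_n, F_{n+1} be invertible d×d matrices with positive determinant satisfying F_{n+1} = F_n + Δt·G. Then ln(det F_{n+1}) − ln(det F_n) ≥ Δt·tr(F_{n+1}⁻¹G) − (Δt²/2)|F_{n+1}⁻¹G|², where |A|² = tr(AAᵀ). -/

import Mathlib

open Matrix

lemma trace_eq_sum_eigs {d : ℕ} {B : Matrix (Fin d) (Fin d) ℝ} (hH : B.IsHermitian) :
    B.trace = ∑ i, hH.eigenvalues i := by
  conv_lhs => rw [hH.spectral_theorem, Unitary.conjStarAlgAut_apply]
  rw [Matrix.trace_mul_cycle]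
  rw [show (star (Matrix.IsHermitian.eigenvectorUnitary hH : Matrix (Fin d) (Fin d) ℝ)) *
      (Matrix.IsHermitian.eigenvectorUnitary hH : Matrix (Fin d) (Fin d) ℝ) = 1 from
    Unitary.coe_star_mul_self _]
  simp [Matrix.trace_diagonal]

lemma log_det_le {d : ℕ} {B : Matrix (Fin d) (Fin d) ℝ} (hB : B.PosSemidef)
    (hdet : 0 < B.det) : Real.log B.det ≤ B.trace - d := by
  have hH := hB.isHermitian
  have hdet' : B.det = ∏ i, hH.eigenvalues i := by
    simpa using hH.det_eq_prod_eigenvalues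
  have hpos : ∀ i, 0 < hH.eigenvalues i := by
    intro i
    rcases lt_or_eq_of_le (hB.eigenvalues_nonneg i) with h | h
    · exact h
    · exfalso
      rw [hdet'] at hdet
      have : (∏ j, hH.eigenvalues j) = 0 := Finset.prod_eq_zero (Finset.mem_univ i) h.symm
      linarith
  rw [hdet', Real.log_prod (fun i _ => (hpos i).ne'), trace_eq_sum_eigs hH]
  have : ∑ i, Real.log (hH.eigenvalues i) ≤ ∑ i : Fin d, (hH.eigenvalues i - 1) :=
    Finset.sum_le_sum fun i _ => Real.log_le_sub_one_of_pos (hpos i)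
  simpa [Finset.sum_sub_distrib] using this

theorem logDet_update_bound (d : ℕ) (Fn Fn1 G : Matrix (Fin d) (Fin d) ℝ)
    (Δt : ℝ) (hFn : 0 < Fn.det) (hFn1 : 0 < Fn1.det)
    (h : Fn1 = Fn + Δt • G) :
    Real.log Fn1.det - Real.log Fn.det
      ≥ Δt * (Fn1⁻¹ * G).trace
        - (Δt^2/2) * ((Fn1⁻¹ * G) * (Fn1⁻¹ * G)ᵀ).trace := by
  set X := Fn1⁻¹ * G with hX
  set A := Δt • X with hA
  have hdet1 : Fn1.det ≠ 0 := hFn1.ne'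
  have hinv : Fn1 * Fn1⁻¹ = 1 := Matrix.mul_nonsing_inv _ (isUnit_iff_ne_zero.mpr hdet1)
  have hFnEq : Fn = Fn1 * (1 - A) := by
    rw [hA, hX, Matrix.mul_sub, mul_one, Matrix.mul_smul, ← mul_assoc, hinv, one_mul]
    rw [h]; abel
  set M := (1 : Matrix (Fin d) (Fin d) ℝ) - A with hM
  have hdetM : 0 < M.det := by
    have : Fn.det = Fn1.det * M.det := by rw [hFnEq, Matrix.det_mul]
    nlinarith
  have hdetM' : Mᵀ.det = M.det := Matrix.det_transpose M
  have hPSD : (M * Mᵀ).PosSemidef := by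
    simpa using Matrix.posSemidef_self_mul_conjTranspose M
  have hdetMM : (M * Mᵀ).det = M.det ^ 2 := by
    rw [Matrix.det_mul, hdetM']; ring
  have hkey : Real.log (M * Mᵀ).det ≤ (M * Mᵀ).trace - d :=
    log_det_le hPSD (by rw [hdetMM]; positivity)
  have hlogMM : Real.log (M * Mᵀ).det = 2 * Real.log M.det := by
    rw [hdetMM, Real.log_pow]; push_cast; ring
  have htr : (M * Mᵀ).trace = (d : ℝ) - 2 * A.trace + (A * Aᵀ).trace := by
    have hT : Aᵀ.trace = A.trace := Matrix.trace_transpose A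
    rw [hM]
    simp only [Matrix.sub_mul, Matrix.mul_sub, Matrix.transpose_sub, Matrix.transpose_one,
      one_mul, mul_one, Matrix.trace_sub, Matrix.trace_one, hT, Fintype.card_fin]
    ring
  have hlogM : Real.log M.det ≤ - A.trace + (A * Aᵀ).trace / 2 := by
    rw [hlogMM, htr] at hkey; linarith
  have hlogFn : Real.log Fn.det = Real.log Fn1.det + Real.log M.det := by
    rw [hFnEq, Matrix.det_mul, Real.log_mul hdet1 hdetM.ne']
  have htrA : A.trace = Δt * X.trace := by rw [hA, Matrix.trace_smul]; simp
  have htrAA : (A * Aᵀ).trace = Δt ^ 2 * (X * Xᵀ).trace := by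
    rw [hA]
    rw [Matrix.transpose_smul, Matrix.smul_mul, Matrix.mul_smul, smul_smul, Matrix.trace_smul]
    simp [pow_two]
  rw [hlogFn]
  rw [htrA, htrAA] at hlogM
  linarith
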